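/- Let P ∈ F_q[x_1,…,x_n]. Then: (1) P vanishes at every point of F_q^n if and only if P lies in the ideal generated by x_1^q − x_1, …, x_n^q − x_n; and (2) P has no zero in F_q^n if and only if P^{q−1} − 1 lies in the ideal generated by x_1^q − x_1, …, x_n^q − x_n. -/

import Mathlib

open MvPolynomial

private def redExp (q d : ℕ) : ℕ :=
  if h : 2 ≤ q ∧ q ≤ d then redExp q (d - (q - 1)) else d
termination_by d
decreasing_by omega

private lemma redExp_lt {q : ℕ} (hq : 2 ≤ q) (d : ℕ) : redExp q d < q := by
  induction d using Nat.strong_induction_on with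
  | _ d ih =>
    rw [redExp]
    split_ifs with h
    · exact ih _ (by omega)
    · omega

private lemma redExp_zero (q : ℕ) : redExp q 0 = 0 := by
  rw [redExp, dif_neg (by omega)]

private lemma key_pow_mem {R : Type*} [CommRing R] {I : Ideal R} {x : R} {q : ℕ}
    (hx : x ^ q - x ∈ I) (d : ℕ) : x ^ d - x ^ redExp q d ∈ I := by
  induction d using Nat.strong_induction_on with
  | _ d ih =>
    rw [redExp]
    split_ifs with h
    · have e1 : x ^ d = x ^ (d - q) * x ^ q := by
        rw [← pow_add]; congr 1; omega
      have e2 : x ^ (d - (q - 1)) = x ^ (d - q) * x := by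
        rw [← pow_succ]; congr 1; omega
      have h1 : x ^ d - x ^ (d - (q - 1)) = x ^ (d - q) * (x ^ q - x) := by
        rw [e1, e2]; ring
      have h2 := ih (d - (q - 1)) (by omega)
      have h3 : x ^ d - x ^ redExp q (d - (q - 1)) =
          (x ^ d - x ^ (d - (q - 1))) + (x ^ (d - (q - 1)) - x ^ redExp q (d - (q - 1))) := by
        ring
      rw [h3, h1]
      exact I.add_mem (I.mul_mem_left _ hx) h2
    · simp

private lemma prod_sub_prod_mem {R : Type*} [CommRing R] {I : Ideal R} {ι : Type*}
    [DecidableEq ι] (s : Finset ι) (f g : ι → R) (h : ∀ i ∈ s, f i - g i ∈ I) :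
    (∏ i ∈ s, f i) - (∏ i ∈ s, g i) ∈ I := by
  induction s using Finset.induction with
  | empty => simp
  | @insert a s has ih =>
    rw [Finset.prod_insert has, Finset.prod_insert has]
    have : f a * ∏ i ∈ s, f i - g a * ∏ i ∈ s, g i =
        f a * ((∏ i ∈ s, f i) - ∏ i ∈ s, g i) + (f a - g a) * ∏ i ∈ s, g i := by ring
    rw [this]
    exact I.add_mem (I.mul_mem_left _ (ih fun i hi => h i (Finset.mem_insert_of_mem hi)))
      (I.mul_mem_right _ (h a (Finset.mem_insert_self a s)))


private lemma my_eq_zero {F : Type*} [Field F] [Fintype F] {n : ℕ}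
    (R : MvPolynomial (Fin n) F) (h : ∀ v : Fin n → F, eval v R = 0)
    (hR : R ∈ restrictDegree (Fin n) F (Fintype.card F - 1)) : R = 0 := by
  classical
  let e : ULift (Fin n) ≃ Fin n := Equiv.ulift
  let R' : MvPolynomial (ULift (Fin n)) F := rename e.symm R
  have hR' : R' ∈ restrictDegree (ULift (Fin n)) F (Fintype.card F - 1) := by
    rw [mem_restrictDegree] at hR ⊢
    intro s hs i
    rw [support_rename_of_injective e.symm.injective, Finset.mem_image] at hs
    obtain ⟨t, ht, rfl⟩ := hs
    rw [show i = e.symm (e i) by simp, Finsupp.mapDomain_apply e.symm.injective]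
    exact hR t ht _
  have h0 : R' = 0 := by
    refine eq_zero_of_eval_eq_zero (ULift (Fin n)) F R' (fun v => ?_) hR'
    rw [eval_rename]
    exact h _
  have : rename e.symm R = rename e.symm 0 := by simpa [R'] using h0
  exact rename_injective _ e.symm.injective this

/-- For `P ∈ F_q[x_1,…,x_n]`:
(1) `P` vanishes at every point of `F_q^n` iff `P` lies in the ideal generated by the
field polynomials `x_i^q − x_i`; and
(2) `P` has no zero in `F_q^n` iff `P^{q−1} − 1` lies in that ideal. -/
theorem stmt_5 {F : Type*} [Field F] [Fintype F] {n : ℕ} (P : MvPolynomial (Fin n) F) :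
    ((∀ a : Fin n → F, eval a P = 0) ↔
        P ∈ Ideal.span (Set.range fun i : Fin n => X i ^ Fintype.card F - X i)) ∧
      ((¬ ∃ a : Fin n → F, eval a P = 0) ↔
        P ^ (Fintype.card F - 1) - 1 ∈
          Ideal.span (Set.range fun i : Fin n => X i ^ Fintype.card F - X i)) := by
  classical
  set q := Fintype.card F with hq
  have hq2 : 2 ≤ q := Fintype.one_lt_card
  set I : Ideal (MvPolynomial (Fin n) F) :=
    Ideal.span (Set.range fun i : Fin n => X i ^ q - X i) with hI
  -- generators vanish everywhere
  have hIe : ∀ (Q : MvPolynomial (Fin n) F), Q ∈ I → ∀ a : Fin n → F, eval a Q = 0 := by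
    intro Q hQ a
    have : I ≤ RingHom.ker (eval a) := by
      rw [hI, Ideal.span_le]
      rintro _ ⟨i, rfl⟩
      simp only [SetLike.mem_coe, RingHom.mem_ker, map_sub, map_pow, eval_X,
        FiniteField.pow_card, sub_self]
      rw [hq, FiniteField.pow_card, sub_self]
    simpa [RingHom.mem_ker] using this hQ
  -- reduction: every P is congruent mod I to a restricted-degree polynomial
  have hred : ∀ (Q : MvPolynomial (Fin n) F),
      ∃ R : MvPolynomial (Fin n) F,
        R ∈ restrictDegree (Fin n) F (q - 1) ∧ Q - R ∈ I := by
    intro Q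
    refine ⟨∑ d ∈ Q.support,
      monomial (d.mapRange (redExp q) (redExp_zero q)) (Q.coeff d), ?_, ?_⟩
    · refine Submodule.sum_mem _ fun d _ => ?_
      rw [mem_restrictDegree]
      intro s hs i
      have := MvPolynomial.support_monomial_subset hs
      simp only [Finset.mem_singleton] at this
      subst this
      have := redExp_lt hq2 (d i)
      simp [Finsupp.mapRange_apply]
      omega
    · nth_rewrite 1 [← Q.support_sum_monomial_coeff]
      rw [← Finset.sum_sub_distrib]
      refine Submodule.sum_mem _ fun d _ => ?_
      rw [monomial_eq, monomial_eq,
        Finsupp.prod_fintype _ _ (fun i => pow_zero (X i : MvPolynomial (Fin n) F)),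
        Finsupp.prod_fintype _ _ (fun i => pow_zero (X i : MvPolynomial (Fin n) F))]
      rw [← mul_sub]
      refine I.mul_mem_left _ ?_
      refine prod_sub_prod_mem _ _ _ fun i _ => ?_
      simp only [Finsupp.mapRange_apply]
      refine key_pow_mem ?_ (d i)
      exact Ideal.subset_span ⟨i, rfl⟩
  have part1 : (∀ a : Fin n → F, eval a P = 0) ↔ P ∈ I := by
    constructor
    · intro h
      obtain ⟨R, hR, hPR⟩ := hred P
      have hR0 : R = 0 := by
        refine my_eq_zero R (fun v => ?_) hR
        have h1 := hIe _ hPR v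
        have hPv := h v
        simp only [map_sub] at h1
        rw [hPv] at h1
        simpa using h1
      rw [← sub_zero P, ← hR0]
      exact hPR
    · intro h a
      exact hIe P h a
  refine ⟨part1, ?_⟩
  constructor
  · intro h
    have : ∀ a : Fin n → F, eval a (P ^ (q - 1) - 1) = 0 := by
      intro a
      have hne : eval a P ≠ 0 := fun hc => h ⟨a, hc⟩
      rw [map_sub, map_pow, map_one, hq, FiniteField.pow_card_sub_one_eq_one _ hne, sub_self]
    obtain ⟨R, hR, hPR⟩ := hred (P ^ (q - 1) - 1)
    have hR0 : R = 0 := by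
      refine my_eq_zero R (fun v => ?_) hR
      have h1 := hIe _ hPR v
      simp only [map_sub] at h1
      have h2 := this v
      simp only [map_sub] at h2
      linear_combination h2 - h1
    rw [← sub_zero (P ^ (q - 1) - 1), ← hR0]
    exact hPR
  · rintro h ⟨a, ha⟩
    have := hIe _ h a
    simp only [map_sub, map_pow, map_one, ha] at this
    rw [zero_pow (by omega)] at this
    simp at this
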